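/- Let Γ be a finite group and let A ⊆ Γ be a symmetric subset containing the identity. If m ≥ 1 is such that |A| > |Γ|/(m+1), then A^{3m} equals the subgroup generated by A. -/
import Mathlib

open Pointwise

/-- Let `Γ` be a finite group and `A ⊆ Γ` a symmetric subset containing the identity.
If `m ≥ 1` and `|A| > |Γ|/(m+1)`, then `A^{3m}` equals the subgroup generated by `A`. -/
theorem finite_group_large_symmetric_set_pow_eq_closure
    {Γ : Type*} [Group Γ] [Fintype Γ] [DecidableEq Γ] (A : Finset Γ)
    (hsymm : A⁻¹ = A) (hone : (1 : Γ) ∈ A) (m : ℕ) (hm : 1 ≤ m)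
    (hcard : Fintype.card Γ < (m + 1) * A.card) :
    (A : Set Γ) ^ (3 * m) = (Subgroup.closure (A : Set Γ) : Set Γ) := by
  have hAinv : ∀ a ∈ A, a⁻¹ ∈ A := fun a ha => by
    rw [← hsymm]; simpa using ha
  -- Key induction: either we can find k+1 pairwise disjoint translates of A with
  -- translating points in A^(3k), or the closure is contained in A^(3m).
  have key : ∀ k : ℕ, k ≤ m →
      (∃ X : Finset Γ, X.card = k + 1 ∧ (1 : Γ) ∈ X ∧ X ⊆ A ^ (3 * k) ∧
        (X : Set Γ).Pairwise fun x y => Disjoint (x • A) (y • A))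
      ∨ (Subgroup.closure (A : Set Γ) : Set Γ) ⊆ ↑(A ^ (3 * m)) := by
    intro k hk
    induction k with
    | zero =>
      left
      refine ⟨{1}, by simp, by simp, ?_, by simp⟩
      simp
    | succ k ih =>
      rcases ih (Nat.le_of_succ_le hk) with ⟨X, hXcard, hX1, hXsub, hXdisj⟩ | hdone
      · by_cases hsub : X * A * A * A ⊆ X * A * A
        · right
          have hmem : ∀ g ∈ Subgroup.closure (A : Set Γ), g ∈ X * A * A := by
            intro g hg
            induction hg using Subgroup.closure_induction_right with
            | one => simpa using Finset.mul_mem_mul (Finset.mul_mem_mul hX1 hone) hone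
            | mul_right x hx y hy hxp =>
              exact hsub (Finset.mul_mem_mul hxp (by exact_mod_cast hy))
            | mul_inv_cancel x hx y hy hxp =>
              exact hsub (Finset.mul_mem_mul hxp (hAinv y (by exact_mod_cast hy)))
          intro g hg
          have h1 : g ∈ X * A * A := hmem g hg
          have h2 : X * A * A ⊆ A ^ (3 * k) * A * A :=
            Finset.mul_subset_mul_right (Finset.mul_subset_mul_right hXsub)
          have h3 : A ^ (3 * k) * A * A = A ^ (3 * k + 2) := by
            rw [pow_succ, pow_succ]
          have h4 : A ^ (3 * k + 2) ⊆ A ^ (3 * m) :=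
            Finset.pow_subset_pow_right hone (by omega)
          exact_mod_cast h4 (h3 ▸ h2 h1)
        · left
          obtain ⟨h, hh3, hh2⟩ := Finset.not_subset.1 hsub
          have hhX : h ∉ X := fun hmemX =>
            hh2 (by simpa using Finset.mul_mem_mul (Finset.mul_mem_mul hmemX hone) hone)
          have keydisj : ∀ x ∈ X, Disjoint (h • A) (x • A) := by
            intro x hx
            rw [Finset.disjoint_left]
            rintro g hg1 hg2
            obtain ⟨a, ha, rfl⟩ := Finset.mem_smul_finset.1 hg1
            obtain ⟨b, hb, hba⟩ := Finset.mem_smul_finset.1 hg2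
            have : h = x * b * a⁻¹ := eq_mul_inv_of_mul_eq hba.symm
            exact hh2 (this ▸ Finset.mul_mem_mul
              (Finset.mul_mem_mul hx hb) (hAinv a ha))
          refine ⟨insert h X, ?_, Finset.mem_insert_of_mem hX1, ?_, ?_⟩
          · rw [Finset.card_insert_of_notMem hhX, hXcard]
          · intro x hx
            rcases Finset.mem_insert.1 hx with rfl | hx
            · have hstep : X * A * A * A ⊆ A ^ (3 * (k + 1)) := by
                have : A ^ (3 * k) * A * A * A = A ^ (3 * (k + 1)) := by
                  rw [show 3 * (k + 1) = (3 * k + 1 + 1) + 1 by ring,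
                    pow_succ, pow_succ, pow_succ]
                exact this ▸ Finset.mul_subset_mul_right
                  (Finset.mul_subset_mul_right (Finset.mul_subset_mul_right hXsub))
              exact hstep hh3
            · exact Finset.pow_subset_pow_right hone (by omega) (hXsub hx)
          · intro x hx y hy hxy
            rcases Finset.mem_insert.1 (by exact_mod_cast hx) with rfl | hx' <;>
              rcases Finset.mem_insert.1 (by exact_mod_cast hy) with rfl | hy'
            · exact absurd rfl hxy
            · exact keydisj y hy'
            · exact (keydisj x hx').symm
            · exact hXdisj (by exact_mod_cast hx') (by exact_mod_cast hy') hxy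
      · exact Or.inr hdone
  rcases key m le_rfl with ⟨X, hXcard, -, -, hXdisj⟩ | hdone
  · exfalso
    have hdisj : ∀ x ∈ X, ∀ y ∈ X, x ≠ y → Disjoint (x • A) (y • A) :=
      fun x hx y hy hxy => hXdisj hx hy hxy
    have hcardU := Finset.card_biUnion hdisj
    have hle : (X.biUnion fun x => x • A).card ≤ Fintype.card Γ :=
      Finset.card_le_univ _
    rw [hcardU] at hle
    have hsum : ∑ x ∈ X, (x • A).card = (m + 1) * A.card := by
      simp [Finset.card_smul_finset, hXcard, mul_comm]
    omega
  · have hpowsub : ∀ n : ℕ,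
        (↑(Subgroup.closure (A : Set Γ)) : Set Γ) ^ n ⊆
          ↑(Subgroup.closure (A : Set Γ)) := by
      intro n
      induction n with
      | zero =>
        rw [pow_zero]
        intro g hg
        simp only [Set.mem_one] at hg
        exact hg ▸ SetLike.mem_coe.2 (one_mem _)
      | succ n ih =>
        rw [pow_succ]
        rintro g hg
        obtain ⟨a, ha, b, hb, rfl⟩ := Set.mem_mul.1 hg
        exact mul_mem (ih ha) hb
    apply Set.Subset.antisymm
    · exact (Set.pow_subset_pow_left Subgroup.subset_closure).trans (hpowsub (3 * m))
    · intro g hg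
      have := hdone hg
      rwa [Finset.coe_pow] at this
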